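/- For every n ∈ ℤ⁺, the number of tilings of [1,n] by tiles of size α equals the number of tilings of [1,n] by tiles of size n/α whenever α divides n; more precisely, there is a bijection between {(A,B) : A+B = [1,n], |A| = α, |B| = n/α, 0 ∈ B, min B ≥ 0} and {(A,B) : A+B = [1,n], |A| = n/α, |B| = α, 0 ∈ B, min B ≥ 0}. -/
import Mathlib


open Finset Pointwise

/-- A canonical tiling of `[1,n]` with tile size `α`. -/
def CanTiling (n α : ℕ) (p : Finset ℤ × Finset ℤ) : Prop :=
  p.1 + p.2 = Finset.Icc 1 (n : ℤ) ∧ p.1.card = α ∧ p.2.card = n / α ∧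
    (0 : ℤ) ∈ p.2 ∧ ∀ b ∈ p.2, 0 ≤ b

lemma singleton_cancel (S : Finset ℤ) : ({1} : Finset ℤ) + (S + {-1}) = S := by
  ext x
  simp only [Finset.mem_add, Finset.mem_singleton]
  constructor
  · rintro ⟨a, rfl, b, ⟨s, hs, d, rfl, rfl⟩, rfl⟩
    rw [show (1 : ℤ) + (s + -1) = s by ring]
    exact hs
  · intro hx
    exact ⟨1, rfl, x + -1, ⟨x, hx, -1, rfl, rfl⟩, by ring⟩

lemma shift_cancel (S : Finset ℤ) : (({1} : Finset ℤ) + S) + {-1} = S := by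
  ext x
  simp only [Finset.mem_add, Finset.mem_singleton]
  constructor
  · rintro ⟨c, ⟨o, rfl, s, hs, rfl⟩, d, rfl, rfl⟩
    rw [show (1 : ℤ) + s + -1 = s by ring]
    exact hs
  · intro hx
    exact ⟨1 + x, ⟨1, rfl, x, hx, rfl⟩, -1, rfl, by ring⟩

lemma sum_shift (A B : Finset ℤ) : (({1} : Finset ℤ) + B) + (A + {-1}) = A + B := by
  ext x
  simp only [Finset.mem_add, Finset.mem_singleton]
  constructor
  · rintro ⟨c, ⟨o, rfl, b, hb, rfl⟩, d, ⟨a, ha, e, rfl, rfl⟩, rfl⟩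
    exact ⟨a, ha, b, hb, by ring⟩
  · rintro ⟨a, ha, b, hb, rfl⟩
    exact ⟨1 + b, ⟨1, rfl, b, hb, rfl⟩, a + -1, ⟨a, ha, -1, rfl, rfl⟩, by ring⟩

lemma key (n β : ℕ) (hn : 0 < n) (hβ : β ∣ n) (p : Finset ℤ × Finset ℤ)
    (hp : CanTiling n β p) :
    CanTiling n (n / β) (({1} : Finset ℤ) + p.2, p.1 + {-1}) := by
  obtain ⟨hsum, hA, hB, h0, hpos⟩ := hp
  -- every element of p.1 is ≥ 1
  have hA1 : ∀ a ∈ p.1, (1 : ℤ) ≤ a := by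
    intro a ha
    have : a + 0 ∈ p.1 + p.2 := Finset.add_mem_add ha h0
    rw [hsum, Finset.mem_Icc] at this
    omega
  -- 1 ∈ p.1
  have h1 : (1 : ℤ) ∈ p.1 := by
    have h1m : (1 : ℤ) ∈ p.1 + p.2 := by
      rw [hsum, Finset.mem_Icc]
      exact ⟨le_refl 1, by exact_mod_cast hn⟩
    rw [Finset.mem_add] at h1m
    obtain ⟨a, ha, b, hb, hab⟩ := h1m
    have := hA1 a ha
    have := hpos b hb
    have : a = 1 := by omega
    rwa [this] at ha
  have hβ' : β = n / (n / β) := (Nat.div_div_self hβ hn.ne').symm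
  refine ⟨?_, ?_, ?_, ?_, ?_⟩
  · show ({1} : Finset ℤ) + p.2 + (p.1 + {-1}) = _
    rw [sum_shift, hsum]
  · show (({1} : Finset ℤ) + p.2).card = n / β
    rw [Finset.singleton_add, Finset.card_vadd_finset, hB]
  · show (p.1 + ({-1} : Finset ℤ)).card = n / (n / β)
    rw [Finset.add_singleton, Finset.card_vadd_finset, hA]
    exact hβ'
  · show (0 : ℤ) ∈ p.1 + {-1}
    rw [Finset.add_singleton, Finset.mem_vadd_finset]
    exact ⟨1, h1, by simp⟩
  · intro b hb
    rw [Finset.mem_add] at hb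
    obtain ⟨a, ha, c, hc, rfl⟩ := hb
    rw [Finset.mem_singleton] at hc
    subst hc
    have := hA1 a ha
    omega

/-- There is a bijection between canonical tilings of `[1,n]` with tile size `α`
and canonical tilings of `[1,n]` with tile size `n/α`, when `α ∣ n`. -/
theorem tilings_size_swap_bijection (n α : ℕ) (hn : 0 < n) (hα : α ∣ n) :
    Nonempty ({p : Finset ℤ × Finset ℤ // CanTiling n α p} ≃
              {p : Finset ℤ × Finset ℤ // CanTiling n (n / α) p}) := by
  refine ⟨{
    toFun := fun ⟨p, hp⟩ => ⟨(({1} : Finset ℤ) + p.2, p.1 + {-1}), key n α hn hα p hp⟩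
    invFun := fun ⟨p, hp⟩ => ⟨(({1} : Finset ℤ) + p.2, p.1 + {-1}), by
      have h := key n (n / α) hn (Nat.div_dvd_of_dvd hα) p hp
      rwa [Nat.div_div_self hα hn.ne'] at h⟩
    left_inv := fun ⟨p, hp⟩ => by
      apply Subtype.ext
      simp only
      exact Prod.ext (singleton_cancel p.1) (shift_cancel p.2)
    right_inv := fun ⟨p, hp⟩ => by
      apply Subtype.ext
      simp only
      exact Prod.ext (singleton_cancel p.1) (shift_cancel p.2)
  }⟩
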